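/- Every continuous strongly P-equivariant function g : R^n → C factors through the hull: there exists a continuous function g̃ : M_P → C with g̃(P − x) = g(x) for all x ∈ R^n, defined by g̃(ω) = g(P − y) for any y with B_r ∩ (P − y) = B_r ∩ ω (r the equivariance radius of g). -/

import Mathlib

open Metric Set Uniformity

noncomputable section

/-- Euclidean space ℝ^n. -/
abbrev E (n : ℕ) := EuclideanSpace ℝ (Fin n)

variable {V : Type*} [SeminormedAddCommGroup V]

/-- The setTranslate `S - x` of a point set `S`. -/
def setTranslate (S : Set V) (x : V) : Set V := {v | x + v ∈ S}

/-- The `r`-patch of `P` at `x`: `B_r ∩ (P - x)` where `B_r` is the closed `r`-ball at `0`. -/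
def patch (P : Set V) (x : V) (r : ℝ) : Set V := Metric.closedBall (0 : V) r ∩ setTranslate P x

/-- `f` is strongly `P`-equivariant: for some `r > 0`, equality of the `r`-patches of `P`
at `x` and `y` implies `f x = f y`. -/
def StronglyEquivariant (P : Set V) {X : Type*} (f : V → X) : Prop :=
  ∃ r > 0, ∀ x y : V, patch P x r = patch P y r → f x = f y

/-- `D` is locally derivable from `P`. -/
def LocallyDerivable (P D : Set V) : Prop :=
  ∀ r > 0, ∃ R > 0, ∀ x y : V, patch P x R = patch P y R → patch D x r = patch D y r

/-- `P` has finite local complexity: for each `r > 0` there are only finitely many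
translation classes of `r`-patches (anchored at points of `P`). -/
def FiniteLocalComplexity (P : Set V) : Prop :=
  ∀ r > 0, {s : Set V | ∃ p ∈ P, s = patch P p r}.Finite

/-- `P` is uniformly discrete. -/
def UniformlyDiscrete (P : Set V) : Prop :=
  ∃ r0 > 0, ∀ p ∈ P, ∀ q ∈ P, p ≠ q → r0 ≤ dist p q

/-- `P` is relatively dense. -/
def RelativelyDense (P : Set V) : Prop :=
  ∃ R > 0, ∀ x : V, ∃ p ∈ P, dist x p ≤ R

/-- The pattern (pseudo)metric `D(S,S') = min(1, inf {1/(r+1) | ∃ x x', |x|,|x'| ≤ 1/r,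
B_r ∩ (S-x) = B_r ∩ (S'-x')})`. -/
def patternDist (S S' : Set V) : ℝ :=
  min 1 (sInf {d : ℝ | ∃ r > 0, d = 1 / (r + 1) ∧
    ∃ x x' : V, ‖x‖ ≤ 1 / r ∧ ‖x'‖ ≤ 1 / r ∧ patch S x r = patch S' x' r})

/- ### Auxiliary lemmas -/

lemma mem_patch {P : Set V} {x w : V} {r : ℝ} :
    w ∈ patch P x r ↔ ‖w‖ ≤ r ∧ x + w ∈ P := by
  simp [patch, setTranslate, mem_closedBall, dist_zero_right]

lemma patch_translate (P : Set V) (a t : V) (r : ℝ) :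
    patch (setTranslate P a) t r = patch P (a + t) r := by
  ext w
  simp [patch, setTranslate, add_assoc]

lemma patch_translate_of_eq {P : Set V} {a b : V} {R : ℝ} (h : patch P a R = patch P b R)
    (v : V) {r : ℝ} (hvr : ‖v‖ + r ≤ R) :
    patch P (a + v) r = patch P (b + v) r := by
  have key : ∀ a b : V, patch P a R = patch P b R → patch P (a + v) r ⊆ patch P (b + v) r := by
    intro a b h w hw
    rw [mem_patch] at hw ⊢
    refine ⟨hw.1, ?_⟩
    have h1 : v + w ∈ patch P a R := by
      rw [mem_patch]
      exact ⟨le_trans (norm_add_le _ _) (by linarith [hw.1]), by rw [← add_assoc]; exact hw.2⟩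
    rw [h, mem_patch] at h1
    rw [add_assoc]
    exact h1.2
  exact le_antisymm (key a b h) (key b a h.symm)

/-- Abstract extension lemma: a function uniformly continuous with respect to the pulled-back
metric extends continuously along a dense range map into a complete T0 target. -/
lemma extend_aux {X : Type*} (Y : Type) [MetricSpace Y] [CompleteSpace Y] (ι : X → Y)
    (hdense : DenseRange ι) (g : X → ℂ)
    (key : ∀ ε > 0, ∃ δ > 0, ∀ x y : X, dist (ι x) (ι y) < δ → dist (g x) (g y) < ε) :
    ∃ gt : Y → ℂ, Continuous gt ∧ ∀ x : X, gt (ι x) = g x := by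
  letI : UniformSpace X := UniformSpace.comap ι inferInstance
  have hui : IsUniformInducing ι := ⟨rfl⟩
  have hgc : UniformContinuous g := by
    intro d hd
    obtain ⟨ε, hε, hεd⟩ := Metric.mem_uniformity_dist.mp hd
    obtain ⟨δ, hδ, hkey⟩ := key ε hε
    have huX : 𝓤 X = Filter.comap (fun p : X × X => (ι p.1, ι p.2)) (𝓤 Y) := rfl
    rw [huX, Filter.mem_map, Filter.mem_comap]
    exact ⟨{p : Y × Y | dist p.1 p.2 < δ}, dist_mem_uniformity hδ,
      fun p hp => hεd (hkey p.1 p.2 hp)⟩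
  exact ⟨(hui.isDenseInducing hdense).extend g,
    (uniformContinuous_uniformly_extend hui hdense hgc).continuous,
    fun x => uniformly_extend_of_ind hui hdense hgc x⟩

/-- A continuous strongly equivariant function over a relatively dense FLC set is
uniformly continuous. -/
lemma gUC {n : ℕ} (P : Set (E n)) (hrd : RelativelyDense P) (hFLC : FiniteLocalComplexity P)
    (g : E n → ℂ) (hg : Continuous g) {r₀ : ℝ} (hr₀ : 0 < r₀)
    (hse : ∀ x y : E n, patch P x r₀ = patch P y r₀ → g x = g y) :
    ∀ ε > 0, ∃ δ > 0, ∀ x y : E n, dist x y ≤ δ → dist (g x) (g y) < ε := by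
  obtain ⟨R, hR, hRd⟩ := hrd
  set ρ : ℝ := r₀ + (R + 1) with hρdef
  have hρ : 0 < ρ := by positivity
  have hF : {s : Set (E n) | ∃ p ∈ P, s = patch P p ρ}.Finite := hFLC ρ hρ
  set F := {s : Set (E n) | ∃ p ∈ P, s = patch P p ρ} with hFdef
  haveI : Finite F := hF.to_subtype
  choose rep hrepP hrepeq using fun s : F => s.2
  set K : Set (E n) := ⋃ s : F, closedBall (rep s) (R + 1) with hKdef
  have hK : IsCompact K := isCompact_iUnion fun s => isCompact_closedBall _ _
  have hUC := hK.uniformContinuousOn_of_continuous hg.continuousOn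
  intro ε hε
  obtain ⟨δ, hδ, hδ'⟩ := Metric.uniformContinuousOn_iff.mp hUC ε hε
  refine ⟨min (δ / 2) 1, by positivity, ?_⟩
  intro x y hxy
  have hxy1 : dist x y ≤ 1 := le_trans hxy (min_le_right _ _)
  have hxyδ : dist x y < δ := lt_of_le_of_lt (le_trans hxy (min_le_left _ _)) (by linarith)
  obtain ⟨p, hp, hxp⟩ := hRd x
  set s : F := ⟨patch P p ρ, p, hp, rfl⟩ with hsdef
  set q := rep s with hqdef
  have hq : patch P p ρ = patch P q ρ := hrepeq s
  set v := x - p with hvdef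
  set w := y - p with hwdef
  have hv : ‖v‖ ≤ R := by rw [hvdef, ← dist_eq_norm]; exact hxp
  have hw : ‖w‖ ≤ R + 1 := by
    rw [hwdef]
    calc ‖y - p‖ ≤ ‖y - x‖ + ‖x - p‖ := norm_sub_le_norm_sub_add_norm_sub _ _ _
    _ ≤ 1 + R := by
        rw [← dist_eq_norm, ← dist_eq_norm]
        exact add_le_add (by rw [dist_comm]; exact hxy1) hxp
    _ = R + 1 := by ring
  have hgx : g x = g (q + v) := by
    have hpe : patch P (p + v) r₀ = patch P (q + v) r₀ :=
      patch_translate_of_eq hq v (by linarith)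
    have hpv : p + v = x := by rw [hvdef]; abel
    rw [← hpv]
    exact hse _ _ hpe
  have hgy : g y = g (q + w) := by
    have hpe : patch P (p + w) r₀ = patch P (q + w) r₀ :=
      patch_translate_of_eq hq w (by linarith)
    have hpw : p + w = y := by rw [hwdef]; abel
    rw [← hpw]
    exact hse _ _ hpe
  have hmem : ∀ u : E n, ‖u‖ ≤ R + 1 → q + u ∈ K := by
    intro u hu
    apply mem_iUnion.mpr ⟨s, ?_⟩
    rw [mem_closedBall]
    simpa [dist_eq_norm, hqdef] using hu
  have h1 : q + v ∈ K := hmem v (by linarith)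
  have h2 : q + w ∈ K := hmem w hw
  have hd : dist (q + v) (q + w) < δ := by
    have heq : dist (q + v) (q + w) = dist x y := by
      rw [dist_eq_norm, dist_eq_norm]
      congr 1
      rw [hvdef, hwdef]
      abel
    rw [heq]; exact hxyδ
  rw [hgx, hgy]
  exact hδ' _ h1 _ h2 hd

/-- For a Delone set in dimension `n ≥ 1`, the defining set of the pattern distance is
nonempty (both patterns contain empty patches of a suitable small radius). -/
lemma patternSet_nonempty {n : ℕ} (hn : 0 < n) (P : Set (E n))
    (hud : UniformlyDiscrete P) (hrd : RelativelyDense P) (x y : E n) :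
    {d : ℝ | ∃ r > 0, d = 1 / (r + 1) ∧ ∃ t t' : E n, ‖t‖ ≤ 1 / r ∧ ‖t'‖ ≤ 1 / r ∧
      patch (setTranslate P x) t r = patch (setTranslate P y) t' r}.Nonempty := by
  obtain ⟨r0, hr0, hdisc⟩ := hud
  obtain ⟨R, hR, hRd⟩ := hrd
  set u : E n := EuclideanSpace.single (⟨0, hn⟩ : Fin n) (1 : ℝ) with hudef
  have hu : ‖u‖ = 1 := by rw [hudef, EuclideanSpace.norm_single]; norm_num
  set r : ℝ := min (r0 / 4) (1 / (R + r0 / 2)) with hrdef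
  have hRr0 : 0 < R + r0 / 2 := by positivity
  have hrpos : 0 < r := lt_min (by positivity) (by positivity)
  have hr1 : r ≤ r0 / 4 := min_le_left _ _
  have hr2 : r ≤ 1 / (R + r0 / 2) := min_le_right _ _
  have hbound : R + r0 / 2 ≤ 1 / r := by
    rw [le_div_iff₀ hrpos]
    rw [le_div_iff₀ hRr0] at hr2
    nlinarith
  have key : ∀ z : E n, ∃ t : E n, ‖t‖ ≤ 1 / r ∧ patch (setTranslate P z) t r = ∅ := by
    intro z
    obtain ⟨p, hp, hzp⟩ := hRd z
    refine ⟨(p - z) + (r0 / 2) • u, ?_, ?_⟩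
    · calc ‖(p - z) + (r0 / 2) • u‖ ≤ ‖p - z‖ + ‖(r0 / 2) • u‖ := norm_add_le _ _
      _ ≤ R + r0 / 2 := by
          rw [norm_smul, hu, ← dist_eq_norm,
            Real.norm_of_nonneg (by positivity : (0:ℝ) ≤ r0 / 2), dist_comm]
          simpa using hzp
      _ ≤ 1 / r := hbound
    · rw [patch_translate, eq_empty_iff_forall_notMem]
      intro w hw
      rw [mem_patch] at hw
      obtain ⟨hw1, hw2⟩ := hw
      have hzt : z + ((p - z) + (r0 / 2) • u) + w = p + (r0 / 2) • u + w := by abel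
      rw [hzt] at hw2
      by_cases hqp : p + (r0 / 2) • u + w = p
      · have hcu : (r0 / 2) • u = -w := by
          have := hqp
          have h' : (r0 / 2) • u + w = 0 := by
            have := congrArg (fun z => z - p) hqp
            simpa [add_sub_cancel_left, add_assoc] using this
          linear_combination (norm := abel) h'
        have hnorm : r0 / 2 = ‖w‖ := by
          have := congrArg norm hcu
          rwa [norm_smul, hu, norm_neg, mul_one,
            Real.norm_of_nonneg (by positivity : (0:ℝ) ≤ r0 / 2)] at this
        linarith
      · have hdist := hdisc _ hw2 _ hp hqp
        have hle : dist (p + (r0 / 2) • u + w) p ≤ r0 / 2 + r := by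
          rw [dist_eq_norm]
          have hsub : p + (r0 / 2) • u + w - p = (r0 / 2) • u + w := by abel
          rw [hsub]
          calc ‖(r0 / 2) • u + w‖ ≤ ‖(r0 / 2) • u‖ + ‖w‖ := norm_add_le _ _
          _ ≤ r0 / 2 + r := by
              rw [norm_smul, hu, mul_one,
                Real.norm_of_nonneg (by positivity : (0:ℝ) ≤ r0 / 2)]
              linarith
        linarith
  obtain ⟨t, ht, hte⟩ := key x
  obtain ⟨t', ht', hte'⟩ := key y
  exact ⟨1 / (r + 1), r, hrpos, rfl, t, t', ht, ht', by rw [hte, hte']⟩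

/-- every continuous strongly P-equivariant function factors continuously
through the continuous hull M_P (a complete metric space carrying the pattern metric on
the dense orbit ι of ℝ^n). -/
theorem stronglyEquivariant_factors_through_hull {n : ℕ} (P : Set (E n))
    (hud : UniformlyDiscrete P) (hrd : RelativelyDense P)
    (hFLC : FiniteLocalComplexity P)
    (Y : Type) [MetricSpace Y] [CompleteSpace Y] (ι : E n → Y)
    (hdense : DenseRange ι)
    (hι : ∀ x y : E n, dist (ι x) (ι y) =
      patternDist (setTranslate P x) (setTranslate P y))
    (g : E n → ℂ) (hg : Continuous g) (hSE : StronglyEquivariant P g) :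
    ∃ gt : Y → ℂ, Continuous gt ∧ ∀ x : E n, gt (ι x) = g x := by
  rcases Nat.eq_zero_or_pos n with hn | hn
  · subst hn
    haveI : Subsingleton (E 0) := ⟨fun a b => PiLp.ext fun i => i.elim0⟩
    refine ⟨fun _ => g 0, continuous_const, fun x => ?_⟩
    rw [Subsingleton.elim x 0]
  · obtain ⟨r₀, hr₀, hse⟩ := hSE
    apply extend_aux Y ι hdense g
    intro ε hε
    obtain ⟨η, hη, hE⟩ := gUC P hrd hFLC g hg hr₀ hse (ε / 2) (by positivity)
    set M : ℝ := max r₀ (1 / η) with hM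
    have hM0 : 0 < M := lt_of_lt_of_le hr₀ (le_max_left _ _)
    refine ⟨1 / (M + 1), by positivity, ?_⟩
    intro x y h
    rw [hι] at h
    simp only [patternDist] at h
    have hδ1 : 1 / (M + 1) ≤ 1 := by
      rw [div_le_one (by positivity)]; linarith
    have hne := patternSet_nonempty hn P hud hrd x y
    have hsInf : sInf {d : ℝ | ∃ r > 0, d = 1 / (r + 1) ∧ ∃ t t' : E n, ‖t‖ ≤ 1 / r ∧
        ‖t'‖ ≤ 1 / r ∧ patch (setTranslate P x) t r = patch (setTranslate P y) t' r}
        < 1 / (M + 1) := by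
      rcases min_lt_iff.mp h with h1 | h2
      · linarith
      · exact h2
    obtain ⟨d, hdA, hdlt⟩ := exists_lt_of_csInf_lt hne hsInf
    obtain ⟨r, hr, rfl, t, t', ht, ht', hpatch⟩ := hdA
    have hrM : M < r := by
      have h1 : (0:ℝ) < r + 1 := by linarith
      have h2 : (0:ℝ) < M + 1 := by linarith
      rw [div_lt_div_iff₀ h1 h2] at hdlt
      linarith
    have hrr₀ : r₀ ≤ r := le_trans (le_max_left _ _) hrM.le
    have hrη : 1 / r ≤ η := by
      have h3 : 1 / η < r := lt_of_le_of_lt (le_max_right _ _) hrM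
      rw [div_lt_iff₀ hη] at h3
      rw [div_le_iff₀ hr]
      nlinarith
    rw [patch_translate, patch_translate] at hpatch
    have hpatch₀ : patch P (x + t) r₀ = patch P (y + t') r₀ := by
      have := patch_translate_of_eq hpatch (0 : E n) (r := r₀) (by simpa using hrr₀)
      simpa using this
    have hmid : g (x + t) = g (y + t') := hse _ _ hpatch₀
    have e1 : dist (g x) (g (x + t)) < ε / 2 := by
      apply hE x (x + t)
      rw [dist_eq_norm]
      have hxt : x - (x + t) = -t := by abel
      rw [hxt, norm_neg]
      exact le_trans ht hrη
    have e2 : dist (g (y + t')) (g y) < ε / 2 := by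
      apply hE (y + t') y
      rw [dist_eq_norm]
      have hyt : y + t' - y = t' := by abel
      rw [hyt]
      exact le_trans ht' hrη
    calc dist (g x) (g y) ≤ dist (g x) (g (x + t)) + dist (g (x + t)) (g y) :=
          dist_triangle _ _ _
    _ = dist (g x) (g (x + t)) + dist (g (y + t')) (g y) := by rw [hmid]
    _ < ε / 2 + ε / 2 := add_lt_add e1 e2
    _ = ε := by ring
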